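/- In an infinite stream formed by concatenating codewords of length m over {0,1,2,3}, each distinct from the all-0 and all-3 words, each avoiding pattern (3,0,3), and separated by single bridging symbols (3 if both adjacent codeword-edge symbols are 3, else 0), the maximum possible run of identical consecutive symbols is 2m - 1. -/

import Mathlib

/-- Bridging symbol: 3 if both adjacent codeword-edge symbols are 3, else 0. -/
def bridge (x y : Fin 4) : Fin 4 := if x = 3 ∧ y = 3 then 3 else 0

/-- The stream obtained by concatenating codewords separated by single bridging symbols. -/
def stream : List (List (Fin 4)) → List (Fin 4)
  | [] => []
  | [w] => w
  | w :: ws => w ++ bridge (w.getLastD 0) ((stream ws).headD 0) :: stream ws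

/-- Valid self-clocked codeword: length `m`, avoids (3,0,3), not all-0, not all-3. -/
def ValidWord (m : ℕ) (w : List (Fin 4)) : Prop :=
  w.length = m ∧ ¬ [3, 0, 3] <:+: w ∧
    w ≠ List.replicate m (0 : Fin 4) ∧ w ≠ List.replicate m (3 : Fin 4)

lemma stream_cons_cons (w x : List (Fin 4)) (xs : List (List (Fin 4))) :
    stream (w :: x :: xs)
      = w ++ bridge (w.getLastD 0) ((stream (x :: xs)).headD 0) :: stream (x :: xs) := rfl

lemma stream_cons (w : List (Fin 4)) (ws : List (List (Fin 4))) :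
    ∃ t, stream (w :: ws) = w ++ t := by
  cases ws with
  | nil => exact ⟨[], (List.append_nil w).symm⟩
  | cons x xs => exact ⟨_, stream_cons_cons w x xs⟩

lemma bridge_mem (x y : Fin 4) : bridge x y = 0 ∨ bridge x y = 3 := by
  unfold bridge; split <;> simp

lemma const_prefix {m : ℕ} (hm : 1 ≤ m) {w p : List (Fin 4)} {c : Fin 4}
    (hc : c = 0 ∨ c = 3) (hw : ValidWord m w) (hp : p <+: w)
    (hconst : ∀ x ∈ p, x = c) : p.length ≤ m - 1 := by
  obtain ⟨hlen, _, h0, h3⟩ := hw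
  by_contra h
  push_neg at h
  have hple : p.length ≤ m := by
    have := hp.length_le; omega
  have hpm : p.length = m := by omega
  have hpw : p = w := hp.eq_of_length (by omega)
  have : w = List.replicate m c :=
    List.eq_replicate_iff.mpr ⟨hlen, fun b hb => hconst b (hpw ▸ hb)⟩
  rcases hc with rfl | rfl
  · exact h0 this
  · exact h3 this

lemma const_suffix {m : ℕ} (hm : 1 ≤ m) {w s : List (Fin 4)} {c : Fin 4}
    (hc : c = 0 ∨ c = 3) (hw : ValidWord m w) (hs : s <:+ w)
    (hconst : ∀ x ∈ s, x = c) : s.length ≤ m - 1 := by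
  obtain ⟨hlen, _, h0, h3⟩ := hw
  by_contra h
  push_neg at h
  have hple : s.length ≤ m := by
    have := hs.length_le; omega
  have hsw : s = w := hs.eq_of_length (by omega)
  have : w = List.replicate m c :=
    List.eq_replicate_iff.mpr ⟨hlen, fun b hb => hconst b (hsw ▸ hb)⟩
  rcases hc with rfl | rfl
  · exact h0 this
  · exact h3 this

lemma const_stream_prefix {m : ℕ} (hm : 1 ≤ m) {w : List (Fin 4)}
    {ws : List (List (Fin 4))} (hw : ValidWord m w) {p : List (Fin 4)} {c : Fin 4}
    (hc : c = 0 ∨ c = 3) (hp : p <+: stream (w :: ws))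
    (hconst : ∀ x ∈ p, x = c) : p.length ≤ m - 1 := by
  obtain ⟨t, ht⟩ := stream_cons w ws
  rw [ht] at hp
  rcases le_or_gt p.length m with h | h
  · have hpw : p <+: w :=
      List.prefix_of_prefix_length_le hp (List.prefix_append w t) (by rw [hw.1]; exact h)
    exact const_prefix hm hc hw hpw hconst
  · exfalso
    have hwp : w <+: p :=
      List.prefix_of_prefix_length_le (List.prefix_append w t) hp (by rw [hw.1]; omega)
    have : w = List.replicate m c :=
      List.eq_replicate_iff.mpr ⟨hw.1, fun b hb => hconst b (hwp.subset hb)⟩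
    rcases hc with rfl | rfl
    · exact hw.2.2.1 this
    · exact hw.2.2.2 this

lemma infix_append_decomp {α : Type*} (l xs ys : List α) (h : l <:+: xs ++ ys) :
    l <:+: xs ∨ l <:+: ys ∨ ∃ s p, l = s ++ p ∧ s <:+ xs ∧ p <+: ys := by
  induction xs with
  | nil => right; left; simpa using h
  | cons x xs ih =>
    rw [List.cons_append, List.infix_cons_iff] at h
    rcases h with h | h
    · have h' : l <+: (x :: xs) ++ ys := by simpa using h
      rcases le_or_gt l.length (x :: xs).length with hl | hl
      · left
        exact (List.prefix_of_prefix_length_le h' (List.prefix_append _ _) hl).isInfix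
      · right; right
        have h1 : (x :: xs) <+: l :=
          List.prefix_of_prefix_length_le (List.prefix_append _ _) h' (le_of_lt hl)
        obtain ⟨p, hp⟩ := h1
        refine ⟨x :: xs, p, hp.symm, List.suffix_refl _, ?_⟩
        rw [← hp] at h'
        exact (List.prefix_append_right_inj _).mp h'
    · rcases ih h with h1 | h1 | ⟨s, p, rfl, hs, hp⟩
      · left; exact List.infix_cons_iff.mpr (Or.inr h1)
      · right; left; exact h1
      · exact Or.inr (Or.inr ⟨s, p, rfl, hs.trans (List.suffix_cons x xs), hp⟩)

lemma no303 (k : ℕ) : ¬ [3, 0, 3] <:+: (0 :: List.replicate k (3 : Fin 4)) := by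
  intro h
  have hs := h.sublist
  rw [List.sublist_cons_iff] at hs
  rcases hs with hs | ⟨r, hr, _⟩
  · have : (0 : Fin 4) ∈ List.replicate k (3 : Fin 4) :=
      hs.subset (by simp)
    have := List.eq_of_mem_replicate this
    exact absurd this (by decide)
  · injection hr with h1 _
    exact absurd h1 (by decide)

theorem stmt_13 (m : ℕ) (hm : 2 ≤ m) :
    (∀ ws : List (List (Fin 4)), (∀ w ∈ ws, ValidWord m w) →
      ∀ l : List (Fin 4), l ≠ [] → (∀ x ∈ l, ∀ y ∈ l, x = y) →
        l <:+: stream ws → l.length ≤ 2 * m - 1) ∧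
    (∃ ws : List (List (Fin 4)), (∀ w ∈ ws, ValidWord m w) ∧
      ∃ l : List (Fin 4), (∀ x ∈ l, ∀ y ∈ l, x = y) ∧
        l <:+: stream ws ∧ l.length = 2 * m - 1) := by
  constructor
  · intro ws
    induction ws with
    | nil =>
      intro _ l hne _ hinf
      rw [show stream [] = [] from rfl, List.infix_nil] at hinf
      exact absurd hinf hne
    | cons w ws ih =>
      intro hval l hne hconst hinf
      cases ws with
      | nil =>
        have h1 := hinf.length_le
        rw [show stream [w] = w from rfl, (hval w (by simp)).1] at h1
        omega
      | cons w' ws' =>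
        rw [stream_cons_cons] at hinf
        have hw : ValidWord m w := hval w (by simp)
        have hw' : ValidWord m w' := hval w' (by simp)
        rcases infix_append_decomp l w _ hinf with h | h | ⟨s, p, rfl, hs, hp⟩
        · have h1 := h.length_le
          rw [hw.1] at h1
          omega
        · rw [List.infix_cons_iff] at h
          rcases h with h | h
          · cases l with
            | nil => exact absurd rfl hne
            | cons a l' =>
              obtain ⟨t, ht⟩ := h
              rw [List.cons_append] at ht
              injection ht with h1 h2
              have hc : a = 0 ∨ a = 3 := h1 ▸ bridge_mem _ _
              have h3 : l'.length ≤ m - 1 :=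
                const_stream_prefix (by omega) hw' hc ⟨t, h2⟩
                  (fun x hx => hconst x (by simp [hx]) a (by simp))
              simp only [List.length_cons]
              omega
          · exact ih (fun v hv => hval v (by simp [hv])) l hne hconst h
        · cases p with
          | nil =>
            have h1 := hs.length_le
            rw [hw.1] at h1
            simp only [List.append_nil, List.length_append] at *
            omega
          | cons a p' =>
            obtain ⟨t, ht⟩ := hp
            rw [List.cons_append] at ht
            injection ht with h1 h2
            have hc : a = 0 ∨ a = 3 := h1 ▸ bridge_mem _ _
            have hsc : ∀ x ∈ s, x = a :=
              fun x hx => hconst x (by simp [hx]) a (by simp)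
            have hb1 : s.length ≤ m - 1 := const_suffix (by omega) hc hw hs hsc
            have hb2 : p'.length ≤ m - 1 :=
              const_stream_prefix (by omega) hw' hc ⟨t, h2⟩
                (fun x hx => hconst x (by simp [hx]) a (by simp))
            simp only [List.length_append, List.length_cons]
            omega
  · obtain ⟨k, rfl⟩ : ∃ k, m = k + 2 := ⟨m - 2, by omega⟩
    set m := k + 2 with hmdef
    refine ⟨[0 :: List.replicate (k + 1) 3, List.replicate (k + 1) 3 ++ [0]], ?_, ?_⟩
    · intro w hw
      simp only [List.mem_cons, List.mem_singleton, List.not_mem_nil, or_false] at hw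
      rcases hw with rfl | rfl
      · refine ⟨by simp [hmdef], no303 (k + 1), ?_, ?_⟩
        · intro h
          have h3 : (3 : Fin 4) ∈ 0 :: List.replicate (k + 1) (3 : Fin 4) := by
            simp [List.mem_replicate]
          rw [h] at h3
          exact absurd (List.eq_of_mem_replicate h3) (by decide)
        · intro h
          have h0 : (0 : Fin 4) ∈ 0 :: List.replicate (k + 1) (3 : Fin 4) := by simp
          rw [h] at h0
          exact absurd (List.eq_of_mem_replicate h0) (by decide)
      · refine ⟨by simp [hmdef], ?_, ?_, ?_⟩
        · intro h
          have hrev := (List.reverse_infix.mpr h)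
          rw [show ([3, 0, 3] : List (Fin 4)).reverse = [3, 0, 3] from rfl] at hrev
          rw [List.reverse_append, List.reverse_replicate] at hrev
          exact no303 (k + 1) hrev
        · intro h
          have h3 : (3 : Fin 4) ∈ List.replicate (k + 1) (3 : Fin 4) ++ [(0 : Fin 4)] := by
            simp [List.mem_replicate]
          rw [h] at h3
          exact absurd (List.eq_of_mem_replicate h3) (by decide)
        · intro h
          have h0 : (0 : Fin 4) ∈ List.replicate (k + 1) (3 : Fin 4) ++ [(0 : Fin 4)] := by simp
          rw [h] at h0
          exact absurd (List.eq_of_mem_replicate h0) (by decide)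
    · refine ⟨List.replicate (2 * m - 1) 3, ?_, ?_, by simp⟩
      · intro x hx y hy
        rw [List.eq_of_mem_replicate hx, List.eq_of_mem_replicate hy]
      · rw [stream_cons_cons]
        have hlast : (0 :: List.replicate (k + 1) (3 : Fin 4)).getLastD 0 = 3 := by
          rw [List.replicate_succ', ← List.cons_append, List.getLastD_concat]
        have hhead : ((stream [List.replicate (k + 1) 3 ++ [0]]).headD 0 : Fin 4) = 3 := by
          rw [show stream [List.replicate (k + 1) (3 : Fin 4) ++ [0]]
              = List.replicate (k + 1) (3 : Fin 4) ++ [0] from rfl]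
          rw [List.replicate_succ]
          simp
        rw [hlast, hhead, show bridge 3 3 = 3 from rfl]
        refine ⟨[0], [0], ?_⟩
        rw [show stream [List.replicate (k + 1) (3 : Fin 4) ++ [0]]
            = List.replicate (k + 1) (3 : Fin 4) ++ [0] from rfl]
        have hrep : List.replicate (2 * m - 1) (3 : Fin 4)
            = List.replicate (k + 1) 3 ++ 3 :: List.replicate (k + 1) 3 := by
          rw [show 2 * m - 1 = (k + 1) + ((k + 1) + 1) from by omega,
            List.replicate_add]
          rfl
        rw [hrep]
        simp only [List.cons_append, List.append_assoc, List.singleton_append,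
          List.replicate_succ, List.nil_append]
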